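/- Let k ≥ 1, and let a = (a_1,…,a_k) and a′ = (a′_1,…,a′_k) be k-tuples of positive integers with a_i ≡ a′_i (mod 2^{⌊log₂(2i)⌋}) for every 1 ≤ i ≤ k. Then for every k-tuple θ of nonnegative integers, Φ(a, θ) ≡ Φ(a′, θ) (mod 2). -/

import Mathlib

open Finset

/-- Kummer's criterion mod 2: `C(n+k, k)` is odd iff the binary digits of `n` and `k` are
disjoint. -/
lemma kummer_aux : ∀ m, ∀ n k : ℕ, n + k = m →
    ((n + k).choose k % 2 = 1 ↔ ∀ i, n.testBit i = false ∨ k.testBit i = false) := by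
  intro m
  induction m using Nat.strong_induction_on with
  | _ m ih =>
    intro n k hm
    subst hm
    have : Fact (Nat.Prime 2) := ⟨Nat.prime_two⟩
    have step : (n + k).choose k % 2 =
        (((n + k) % 2).choose (k % 2) * ((n + k) / 2).choose (k / 2)) % 2 :=
      Choose.choose_modEq_choose_mod_mul_choose_div_nat
    by_cases h0 : n + k = 0
    · have hn : n = 0 := by omega
      have hk : k = 0 := by omega
      subst hn hk
      simp [Nat.zero_testBit]
    by_cases hc : n % 2 = 1 ∧ k % 2 = 1
    · have h1 : (n + k) % 2 = 0 := by omega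
      have : (n + k).choose k % 2 = 0 := by
        rw [step, h1]
        have : k % 2 = 1 := hc.2
        rw [this]
        simp [Nat.choose]
      constructor
      · intro h; omega
      · intro h
        rcases h 0 with h' | h'
        · rw [Nat.testBit_zero] at h'; simp at h'; omega
        · rw [Nat.testBit_zero] at h'; simp at h'; omega
    · -- no carry at bit 0
      have hnc : n % 2 = 0 ∨ k % 2 = 0 := by omega
      have h1 : (n + k) % 2 = n % 2 + k % 2 := by omega
      have h2 : (n + k) / 2 = n / 2 + k / 2 := by omega
      have h3 : ((n + k) % 2).choose (k % 2) = 1 := by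
        rcases Nat.mod_two_eq_zero_or_one n with h | h <;>
          rcases Nat.mod_two_eq_zero_or_one k with h' | h' <;>
            simp [h1, h, h'] <;> omega
      have step' : (n + k).choose k % 2 = (n / 2 + k / 2).choose (k / 2) % 2 := by
        rw [step, h3, one_mul, h2]
      have hlt : n / 2 + k / 2 < n + k := by omega
      have IH := ih _ hlt (n / 2) (k / 2) rfl
      rw [step', IH]
      constructor
      · intro h i
        cases i with
        | zero =>
          rw [Nat.testBit_zero, Nat.testBit_zero]
          rcases hnc with h' | h'
          · left; simp [h']
          · right; simp [h']
        | succ j =>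
          rw [Nat.testBit_succ, Nat.testBit_succ]
          exact h j
      · intro h i
        have := h (i + 1)
        rwa [Nat.testBit_succ, Nat.testBit_succ] at this
        
lemma kummer (n k : ℕ) :
    (n + k).choose k % 2 = 1 ↔ ∀ i, n.testBit i = false ∨ k.testBit i = false :=
  kummer_aux _ n k rfl

/-- Core congruence: the parity of `C(a + b - 2, b)` depends only on `a mod 2^L` when
`b < 2^L` and `a ≥ 1`. -/
lemma core (L a a' b : ℕ) (ha : 0 < a) (ha' : 0 < a')
    (hcong : a % 2 ^ L = a' % 2 ^ L) (hb : b < 2 ^ L) :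
    (a + b - 2).choose b % 2 = (a' + b - 2).choose b % 2 := by
  rcases Nat.eq_zero_or_pos b with rfl | hbpos
  · simp
  -- b ≥ 1, so 2^L ≥ 2
  have hL2 : 2 ≤ 2 ^ L := by omega
  -- helper: if a = 1 mod 2^L but a ≥ 2 then C(a+b-2,b) is even
  have even_case : ∀ c : ℕ, 2 ≤ c → c % 2 ^ L = 1 → (c + b - 2).choose b % 2 = 0 := by
    intro c hc2 hc1
    have htop : c + b - 2 = (c - 2) + b := by omega
    have hodd := kummer (c - 2) b
    rw [htop]
    have hmod : (c - 2) % 2 ^ L = 2 ^ L - 1 := by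
      have hd := Nat.div_add_mod c (2 ^ L)
      set q := c / 2 ^ L with hq
      have hq1 : 1 ≤ q := by
        rcases Nat.eq_zero_or_pos q with h0 | h
        · rw [h0, Nat.mul_zero, Nat.zero_add] at hd
          omega
        · exact h
      have hmq : 2 ^ L * (q - 1) = 2 ^ L * q - 2 ^ L := by
        rw [Nat.mul_sub, mul_one]
      have hrepr : c - 2 = 2 ^ L * (q - 1) + (2 ^ L - 1) := by
        have hql : 2 ^ L ≤ 2 ^ L * q := Nat.le_mul_of_pos_right _ (by omega)
        omega
      rw [hrepr, Nat.mul_comm, Nat.add_comm, Nat.add_mul_mod_self_right, Nat.mod_eq_of_lt (by omega)]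
    -- find a true bit of b below L
    obtain ⟨i, hi⟩ := Nat.exists_testBit_of_ne_zero (x := b) (by omega)
    have hiL : i < L := by
      by_contra hiL
      have : b < 2 ^ i := lt_of_lt_of_le hb (Nat.pow_le_pow_right (by norm_num) (by omega))
      rw [Nat.testBit_lt_two_pow this] at hi
      exact Bool.false_ne_true hi
    have hbit : (c - 2).testBit i = true := by
      have h1 : ((c - 2) % 2 ^ L).testBit i = (c - 2).testBit i := by
        rw [Nat.testBit_mod_two_pow]
        simp [hiL]
      rw [← h1, hmod, Nat.testBit_two_pow_sub_one]
      simp [hiL]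
    have : ¬ (((c - 2) + b).choose b % 2 = 1) := by
      rw [hodd]
      push_neg
      exact ⟨i, by simp [hbit, hi]⟩
    omega
  by_cases h1 : a % 2 ^ L = 1
  · -- a ≡ 1
    have h1' : a' % 2 ^ L = 1 := by omega
    rcases Nat.lt_or_ge a 2 with ha2 | ha2 <;> rcases Nat.lt_or_ge a' 2 with ha2' | ha2'
    · have e1 : a = 1 := by omega
      have e2 : a' = 1 := by omega
      rw [e1, e2]
    · have hA : a = 1 := by omega
      rw [hA, even_case a' ha2' h1']
      have : (1 : ℕ) + b - 2 = b - 1 := by omega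
      rw [this, Nat.choose_eq_zero_of_lt (by omega)]
    · have hA : a' = 1 := by omega
      rw [hA, even_case a ha2 h1]
      have : (1 : ℕ) + b - 2 = b - 1 := by omega
      rw [this, Nat.choose_eq_zero_of_lt (by omega)]
    · rw [even_case a ha2 h1, even_case a' ha2' h1']
  · -- a mod 2^L ≠ 1, hence a ≥ 2 and a' ≥ 2 (since a,a' ≥ 1); or a mod = 0 with a ≥ 2^L?
    -- a ≥ 1 and a % 2^L ≠ 1 : still could have a = 2^L·t. But then a ≥ 2 anyway unless a = 1,
    -- and a = 1 would give a % 2^L = 1. So a ≥ 2, a' ≥ 2.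
    have ha2 : 2 ≤ a := by
      rcases Nat.lt_or_ge a 2 with h | h
      · have : a = 1 := by omega
        rw [this] at h1
        simp [Nat.mod_eq_of_lt (show 1 < 2 ^ L by omega)] at h1
      · exact h
    have ha2' : 2 ≤ a' := by
      rcases Nat.lt_or_ge a' 2 with h | h
      · have : a' = 1 := by omega
        rw [this] at hcong
        rw [Nat.mod_eq_of_lt (show 1 < 2 ^ L by omega)] at hcong
        omega
      · exact h
    have htop : a + b - 2 = (a - 2) + b := by omega
    have htop' : a' + b - 2 = (a' - 2) + b := by omega
    rw [htop, htop']
    have hsub : (a - 2) % 2 ^ L = (a' - 2) % 2 ^ L := by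
      have h : a - 2 + 2 ≡ a' - 2 + 2 [MOD 2 ^ L] := by
        rw [Nat.sub_add_cancel ha2, Nat.sub_add_cancel ha2']
        exact hcong
      exact Nat.ModEq.add_right_cancel' 2 h
    -- now compare parities via kummer
    have k1 := kummer (a - 2) b
    have k2 := kummer (a' - 2) b
    have hiff : (∀ i, (a - 2).testBit i = false ∨ b.testBit i = false) ↔
        (∀ i, (a' - 2).testBit i = false ∨ b.testBit i = false) := by
      have key : ∀ i, i < L → (a - 2).testBit i = (a' - 2).testBit i := by
        intro i hiL
        have t1 : ((a - 2) % 2 ^ L).testBit i = (a - 2).testBit i := by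
          rw [Nat.testBit_mod_two_pow]; simp [hiL]
        have t2 : ((a' - 2) % 2 ^ L).testBit i = (a' - 2).testBit i := by
          rw [Nat.testBit_mod_two_pow]; simp [hiL]
        rw [← t1, ← t2, hsub]
      have highb : ∀ i, L ≤ i → b.testBit i = false := by
        intro i hiL
        exact Nat.testBit_lt_two_pow
          (lt_of_lt_of_le hb (Nat.pow_le_pow_right (by norm_num) hiL))
      constructor <;> intro h i
      · rcases Nat.lt_or_ge i L with hlt | hge
        · rw [← key i hlt]; exact h i
        · right; exact highb i hge
      · rcases Nat.lt_or_ge i L with hlt | hge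
        · rw [key i hlt]; exact h i
        · right; exact highb i hge
    have p1 := Nat.mod_two_eq_zero_or_one (((a - 2) + b).choose b)
    have p2 := Nat.mod_two_eq_zero_or_one (((a' - 2) + b).choose b)
    rcases p1 with p1 | p1 <;> rcases p2 with p2 | p2 <;> try omega
    · exfalso
      rw [k2, ← hiff, ← k1] at p2
      omega
    · exfalso
      rw [k1, hiff, ← k2] at p1
      omega

/-- `Phi k a I` is the sum `Σ_B ∏_{i=1}^k C(a_i + b_i - 2, b_i)` over all `k`-tuples
`B = (b_1,…,b_k)` of nonnegative integers such that `B + I ∈ 𝒮_k` (i.e. the sum of the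
first `j` entries of `B + I` is at most `j` for each `1 ≤ j ≤ k`) and
`(b_1+ε_1) + ⋯ + (b_k+ε_k) = k`.  Sequences are 1-indexed: the `i`-th entry of `a` is
`a i` for `1 ≤ i ≤ k`.  The top entry `a_i + b_i - 2` uses truncated subtraction. -/
def Phi (k : ℕ) (a I : ℕ → ℕ) : ℕ :=
  ∑ B ∈ (Fintype.piFinset fun _ : Fin k => Finset.range (k + 1)) |>.filter
      (fun B =>
        (∀ j : Fin k,
          (∑ i ∈ Finset.univ.filter (fun i : Fin k => i ≤ j), (B i + I (i.1 + 1)))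
            ≤ j.1 + 1) ∧
        (∑ i : Fin k, (B i + I (i.1 + 1))) = k),
    ∏ i : Fin k, Nat.choose (a (i.1 + 1) + B i - 2) (B i)

/-- Corollary 4.3: `Φ(a, θ)` mod 2 depends only on the reductions of the `a_i`
mod `2^{⌊log₂(2i)⌋}`. -/
theorem stmt_11 (k : ℕ) (hk : 1 ≤ k) (a a' : ℕ → ℕ)
    (ha : ∀ i ∈ Finset.Icc 1 k, 0 < a i) (ha' : ∀ i ∈ Finset.Icc 1 k, 0 < a' i)
    (hcong : ∀ i ∈ Finset.Icc 1 k, a i ≡ a' i [MOD 2 ^ Nat.log 2 (2 * i)])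
    (θ : ℕ → ℕ) :
    Phi k a θ ≡ Phi k a' θ [MOD 2] := by
  show Phi k a θ % 2 = Phi k a' θ % 2
  unfold Phi
  rw [Finset.sum_nat_mod]
  conv_rhs => rw [Finset.sum_nat_mod]
  congr 1
  apply Finset.sum_congr rfl
  intro B hB
  rw [Finset.prod_nat_mod]
  conv_rhs => rw [Finset.prod_nat_mod]
  congr 1
  apply Finset.prod_congr rfl
  intro i _
  rw [Finset.mem_filter] at hB
  obtain ⟨-, hcond, -⟩ := hB
  have hBi : B i ≤ i.1 + 1 := by
    have h := hcond i
    calc B i ≤ B i + θ (i.1 + 1) := Nat.le_add_right _ _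
      _ ≤ ∑ i' ∈ Finset.univ.filter (fun i' : Fin k => i' ≤ i), (B i' + θ (i'.1 + 1)) :=
        Finset.single_le_sum (f := fun i' : Fin k => B i' + θ (i'.1 + 1))
          (s := Finset.univ.filter (fun i' : Fin k => i' ≤ i))
          (fun _ _ => Nat.zero_le _)
          (Finset.mem_filter.mpr ⟨Finset.mem_univ i, le_refl i⟩)
      _ ≤ i.1 + 1 := h
  set L := Nat.log 2 (2 * (i.1 + 1)) with hL
  have hm : i.1 + 1 < 2 ^ L := by
    have h2 := Nat.lt_pow_succ_log_self (b := 2) (by norm_num) (2 * (i.1 + 1))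
    rw [← hL, pow_succ] at h2
    omega
  have hmem : i.1 + 1 ∈ Finset.Icc 1 k := by
    rw [Finset.mem_Icc]
    exact ⟨by omega, i.isLt⟩
  exact core L (a (i.1 + 1)) (a' (i.1 + 1)) (B i) (ha _ hmem) (ha' _ hmem)
    (hcong _ hmem) (by omega)
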